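/- arXiv:2012.14167 — 2 statements merged into one kernel-verified Lean document; each statement's English description precedes it below -/
import Mathlib

section
/- (Proposition 2, soundness of the branch-and-bound pruning condition.) Let C̄ ∈ ℝ be any upper bound maintained by the search (the expected cost of the best review plan found so far) and let I₀ ∈ ℤ be the initial inventory level. If for some stage t ∈ {1,…,T+1} the pruning condition ⨅_{i ∈ ℤ} C_t(i) ≥ C̄ holds, then ⨅_{i ∈ ℤ} C_1(i) ≥ C̄, and consequently C_1(I₀) ≥ C̄; hence the review plans extending the current partial assignment cannot improve on C̄. -/
/-- Proposition 2, soundness of the branch-and-bound pruning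
condition: if for some stage `t` the pruning condition
`⨅_{i ∈ ℤ} C_t(i) ≥ C̄` holds, then `⨅_{i ∈ ℤ} C_1(i) ≥ C̄` and consequently
`C_1(I₀) ≥ C̄`. -/
theorem pruning_condition_sound
    -- horizon
    (T : ℕ) (hT : 1 ≤ T)
    -- demand distributions with finite support `supp t`
    (p : ℕ → ℤ → ℝ) (supp : ℕ → Finset ℤ)
    (hp_nonneg : ∀ t x, 0 ≤ p t x)
    (hp_neg : ∀ t x, x < 0 → p t x = 0)
    (hp_supp : ∀ t x, x ∉ supp t → p t x = 0)
    (hp_sum : ∀ t, 1 ≤ t → t ≤ T → ∑ x ∈ supp t, p t x = 1)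
    -- review plan γ : {1,…,T} → {0,1}
    (γ : ℕ → ℕ) (hγ : ∀ t, γ t ≤ 1)
    -- costs and order bound
    (W K h b : ℝ) (hW : 0 ≤ W) (hK : 0 ≤ K) (hh : 0 ≤ h) (hb : 0 ≤ b)
    (M : ℕ) (hM : 1 ≤ M)
    -- expected immediate cost
    (f : ℕ → ℤ → ℤ → ℝ)
    (hf : ∀ t I Q, f t I Q =
      (γ t : ℝ) * W + (if 0 < Q then K else 0) +
      ∑ x ∈ supp t, p t x *
        (h * ((max (I + Q - x) 0 : ℤ) : ℝ) + b * ((max (x - I - Q) 0 : ℤ) : ℝ)))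
    -- cost-to-go functions: boundary condition and Bellman recursion
    (C : ℕ → ℤ → ℝ)
    (hC_boundary : ∀ I : ℤ, C (T + 1) I = 0)
    (hC_rec : ∀ t, 1 ≤ t → t ≤ T → ∀ I : ℤ,
      C t I = (Finset.Icc (0 : ℤ) ((M : ℤ) * (γ t : ℤ))).inf'
        (Finset.nonempty_Icc.mpr (by positivity))
        (fun Q => f t I Q + ∑ x ∈ supp t, p t x * C (t + 1) (I + Q - x)))
    -- the claim
    (Cbar : ℝ) (I₀ : ℤ)
    (t : ℕ) (ht1 : 1 ≤ t) (htT : t ≤ T + 1)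
    (hprune : Cbar ≤ ⨅ i : ℤ, C t i) :
    Cbar ≤ (⨅ i : ℤ, C 1 i) ∧ Cbar ≤ C 1 I₀ := by
  have hf_nonneg : ∀ s I Q, 0 ≤ f s I Q := by
    intro s I Q
    rw [hf]
    have h2 : 0 ≤ (if 0 < Q then K else 0) := by split <;> simp [hK]
    have h3 : 0 ≤ ∑ x ∈ supp s, p s x *
        (h * ((max (I + Q - x) 0 : ℤ) : ℝ) + b * ((max (x - I - Q) 0 : ℤ) : ℝ)) := by
      apply Finset.sum_nonneg
      intro x _
      apply mul_nonneg (hp_nonneg s x)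
      have m1 : (0 : ℝ) ≤ ((max (I + Q - x) 0 : ℤ) : ℝ) :=
        Int.cast_nonneg_iff.mpr (le_max_right _ _)
      have m2 : (0 : ℝ) ≤ ((max (x - I - Q) 0 : ℤ) : ℝ) :=
        Int.cast_nonneg_iff.mpr (le_max_right _ _)
      positivity
    have h1 : 0 ≤ (γ s : ℝ) * W := by positivity
    linarith
  have step : ∀ c : ℝ, ∀ s, 1 ≤ s → s ≤ T → (∀ I, c ≤ C (s + 1) I) →
      ∀ I : ℤ, c ≤ C s I := by
    intro c s hs1 hsT hIH I
    rw [hC_rec s hs1 hsT I]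
    apply Finset.le_inf'
    intro Q _
    have hsum : c ≤ ∑ x ∈ supp s, p s x * C (s + 1) (I + Q - x) := by
      calc c = ∑ x ∈ supp s, p s x * c := by
              rw [← Finset.sum_mul, hp_sum s hs1 hsT, one_mul]
        _ ≤ _ := Finset.sum_le_sum
              (fun x _ => mul_le_mul_of_nonneg_left (hIH _) (hp_nonneg s x))
    linarith [hf_nonneg s I Q]
  have nonneg : ∀ n s, 1 ≤ s → s ≤ T + 1 → T + 1 - s ≤ n → ∀ I : ℤ, 0 ≤ C s I := by
    intro n
    induction n with
    | zero =>
      intro s hs1 hs2 hn I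
      have hs : s = T + 1 := by omega
      rw [hs, hC_boundary]
    | succ n ih =>
      intro s hs1 hs2 hn I
      rcases eq_or_lt_of_le hs2 with heq | hlt
      · rw [heq, hC_boundary]
      · exact step 0 s hs1 (by omega)
          (fun I => ih (s + 1) (by omega) (by omega) (by omega) I) I
  have hbdd : BddBelow (Set.range fun i : ℤ => C t i) := by
    refine ⟨0, ?_⟩
    rintro _ ⟨i, rfl⟩
    exact nonneg (T + 1 - t) t ht1 htT le_rfl i
  have hpt : ∀ i : ℤ, Cbar ≤ C t i := fun i => hprune.trans (ciInf_le hbdd i)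
  have main : ∀ s, 1 ≤ s → s ≤ t → (∀ I : ℤ, Cbar ≤ C s I) → ∀ I : ℤ, Cbar ≤ C 1 I := by
    intro s hs1
    induction s, hs1 using Nat.le_induction with
    | base => intro _ hh; exact hh
    | succ s hs ih =>
      intro hst hsI
      exact ih (by omega) (step Cbar s hs (by omega) hsI)
  have h1 : ∀ I : ℤ, Cbar ≤ C 1 I := main t ht1 le_rfl hpt
  exact ⟨le_ciInf h1, h1 I₀⟩
end

section
/- (Soundness of the refined pruning condition with lower bounds.) Let t ∈ {1,…,T}, let C̄ ∈ ℝ and let MC : ℤ → ℝ be a function bounded below, and suppose the total expected cost of the plan decomposes through the closing inventory at period t as follows: there exist a probability mass function D : ℤ → ℝ with D(I) ≥ 0, finite support and Σ_I D(I) = 1 (the distribution of the closing inventory level at period t under the policy), and a function A : ℤ → ℝ with A(I) ≥ MC(I) for every I in the support of D (the expected cost incurred in periods 1,…,t given closing inventory I), such that C_1(I₀) = Σ_I D(I)·( A(I) + C_{t+1}(I) ). If the refined pruning condition ⨅_{I ∈ ℤ} ( C_{t+1}(I) + MC(I) ) ≥ C̄ holds, then C_1(I₀) ≥ C̄. -/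
/-- soundness of the refined pruning condition with lower bounds:
if the total expected cost decomposes through the closing inventory at period
`t` as `C_1(I₀) = Σ_I D(I)·(A(I) + C_{t+1}(I))` with `D` the pmf of the
closing inventory at period `t`, `A(I) ≥ MC(I)` on the support of `D`, and
the refined pruning condition `⨅_I (C_{t+1}(I) + MC(I)) ≥ C̄` holds, then
`C_1(I₀) ≥ C̄`. -/
theorem refined_pruning_condition_sound
    -- horizon
    (T : ℕ) (hT : 1 ≤ T)
    -- demand distributions with finite support `supp t`
    (p : ℕ → ℤ → ℝ) (supp : ℕ → Finset ℤ)
    (hp_nonneg : ∀ t x, 0 ≤ p t x)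
    (hp_neg : ∀ t x, x < 0 → p t x = 0)
    (hp_supp : ∀ t x, x ∉ supp t → p t x = 0)
    (hp_sum : ∀ t, 1 ≤ t → t ≤ T → ∑ x ∈ supp t, p t x = 1)
    -- review plan γ : {1,…,T} → {0,1}
    (γ : ℕ → ℕ) (hγ : ∀ t, γ t ≤ 1)
    -- costs and order bound
    (W K h b : ℝ) (hW : 0 ≤ W) (hK : 0 ≤ K) (hh : 0 ≤ h) (hb : 0 ≤ b)
    (M : ℕ) (hM : 1 ≤ M)
    -- expected immediate cost
    (f : ℕ → ℤ → ℤ → ℝ)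
    (hf : ∀ t I Q, f t I Q =
      (γ t : ℝ) * W + (if 0 < Q then K else 0) +
      ∑ x ∈ supp t, p t x *
        (h * ((max (I + Q - x) 0 : ℤ) : ℝ) + b * ((max (x - I - Q) 0 : ℤ) : ℝ)))
    -- cost-to-go functions: boundary condition and Bellman recursion
    (C : ℕ → ℤ → ℝ)
    (hC_boundary : ∀ I : ℤ, C (T + 1) I = 0)
    (hC_rec : ∀ t, 1 ≤ t → t ≤ T → ∀ I : ℤ,
      C t I = (Finset.Icc (0 : ℤ) ((M : ℤ) * (γ t : ℤ))).inf'
        (Finset.nonempty_Icc.mpr (by positivity))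
        (fun Q => f t I Q + ∑ x ∈ supp t, p t x * C (t + 1) (I + Q - x)))
    -- initial inventory level
    (I₀ : ℤ)
    -- the stage, the incumbent upper bound, and the lower-bound function MC
    (t : ℕ) (ht1 : 1 ≤ t) (htT : t ≤ T)
    (Cbar : ℝ)
    (MC : ℤ → ℝ) (hMC_bdd : BddBelow (Set.range MC))
    -- distribution D of the closing inventory level at period t under the plan
    (D : ℤ → ℝ) (Dsupp : Finset ℤ)
    (hD_nonneg : ∀ I, 0 ≤ D I)
    (hD_supp : ∀ I, I ∉ Dsupp → D I = 0)
    (hD_sum : ∑ I ∈ Dsupp, D I = 1)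
    -- expected cost A(I) incurred in periods 1,…,t given closing inventory I
    (A : ℤ → ℝ)
    (hA : ∀ I, D I ≠ 0 → MC I ≤ A I)
    -- decomposition of the total expected cost of the plan
    (hdecomp : C 1 I₀ = ∑ I ∈ Dsupp, D I * (A I + C (t + 1) I))
    -- refined pruning condition
    (hprune : Cbar ≤ ⨅ I : ℤ, (C (t + 1) I + MC I)) :
    Cbar ≤ C 1 I₀ := by
  -- nonnegativity of cost-to-go functions, backward induction
  have hf_nn : ∀ s (I Q : ℤ), 1 ≤ s → s ≤ T → 0 ≤ f s I Q := by
    intro s I Q _ _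
    rw [hf]
    have h1 : (0:ℝ) ≤ (γ s : ℝ) * W := by positivity
    have h2 : (0:ℝ) ≤ (if 0 < Q then K else 0) := by positivity
    have h3 : (0:ℝ) ≤ ∑ x ∈ supp s, p s x *
        (h * ((max (I + Q - x) 0 : ℤ) : ℝ) + b * ((max (x - I - Q) 0 : ℤ) : ℝ)) := by
      apply Finset.sum_nonneg
      intro x _
      apply mul_nonneg (hp_nonneg s x)
      apply add_nonneg
      · exact mul_nonneg hh (by exact_mod_cast le_max_right _ _)
      · exact mul_nonneg hb (by exact_mod_cast le_max_right _ _)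
    linarith
  have hCnn : ∀ d s, s + d = T + 1 → 1 ≤ s → ∀ I, 0 ≤ C s I := by
    intro d
    induction d with
    | zero =>
      intro s hs _ I
      have : s = T + 1 := by omega
      rw [this, hC_boundary]
    | succ n ih =>
      intro s hs hs1 I
      have hsT : s ≤ T := by omega
      rw [hC_rec s hs1 hsT I]
      apply Finset.le_inf'
      intro Q _
      have h1 := hf_nn s I Q hs1 hsT
      have h2 : (0:ℝ) ≤ ∑ x ∈ supp s, p s x * C (s + 1) (I + Q - x) := by
        apply Finset.sum_nonneg
        intro x _
        exact mul_nonneg (hp_nonneg s x) (ih (s + 1) (by omega) (by omega) _)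
      linarith
  have hCt1 : ∀ I, 0 ≤ C (t + 1) I := hCnn (T - t) (t + 1) (by omega) (by omega)
  -- boundedness and infimum inequality
  obtain ⟨m, hm⟩ := hMC_bdd
  have hbdd : BddBelow (Set.range fun I => C (t + 1) I + MC I) := by
    refine ⟨m, ?_⟩
    rintro _ ⟨I, rfl⟩
    have := hm ⟨I, rfl⟩
    have := hCt1 I
    simp only at *
    linarith
  have hinf_le : ∀ I, Cbar ≤ C (t + 1) I + MC I := fun I =>
    le_trans hprune (ciInf_le hbdd I)
  -- per-term bound
  have hterm : ∀ I ∈ Dsupp, D I * Cbar ≤ D I * (A I + C (t + 1) I) := by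
    intro I _
    by_cases hI : D I = 0
    · simp [hI]
    · apply mul_le_mul_of_nonneg_left _ (hD_nonneg I)
      have := hA I hI
      have := hinf_le I
      linarith
  calc Cbar = ∑ I ∈ Dsupp, D I * Cbar := by rw [← Finset.sum_mul, hD_sum, one_mul]
    _ ≤ ∑ I ∈ Dsupp, D I * (A I + C (t + 1) I) := Finset.sum_le_sum hterm
    _ = C 1 I₀ := hdecomp.symm
end
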